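/- If Y is uniform on a regularly spaced alphabet {y, y+d, y+2d, …, y+(m−1)d} and the encoding pairs y_j with y_{m+1−j} (one bit of key choosing which of the pair is the bin label), then every bin sum equals 2y + (m−1)d, hence E[Y | τ] = E[Y] for every transmitted symbol τ, and the encoding achieves perfect distortion security: Eve's MMSE equals var(Y). -/

import Mathlib

/-- Expectation of `f` under mass function `p` on a finite sample space. -/
noncomputable def pexp {Ω : Type*} [Fintype Ω] (p : Ω → ℝ) (f : Ω → ℝ) : ℝ :=
  ∑ ω, p ω * f ω

/-- Variance of `f` under mass function `p`. -/
noncomputable def pvar {Ω : Type*} [Fintype Ω] (p : Ω → ℝ) (f : Ω → ℝ) : ℝ :=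
  pexp p (fun ω => (f ω - pexp p f) ^ 2)

/-- Minimum mean-squared error of estimating `Y` from the observation `τ`:
the infimum over all estimators `h` of `E[(Y - h(τ))²]`. -/
noncomputable def pmmse {Ω T : Type*} [Fintype Ω] (p : Ω → ℝ) (Y : Ω → ℝ) (τ : Ω → T) : ℝ :=
  sInf {e : ℝ | ∃ h : T → ℝ, e = pexp p (fun ω => (Y ω - h (τ ω)) ^ 2)}

/-- Conditional expectation `E[Y | τ = t]` (with the junk value `0` on null events). -/
noncomputable def pcond {Ω T : Type*} [Fintype Ω] [DecidableEq T]
    (p : Ω → ℝ) (Y : Ω → ℝ) (τ : Ω → T) (t : T) : ℝ :=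
  (∑ ω ∈ Finset.univ.filter (fun ω => τ ω = t), p ω * Y ω) /
    (∑ ω ∈ Finset.univ.filter (fun ω => τ ω = t), p ω)

/-- For a regularly spaced alphabet `y_j = y + (j−1)d`, pairing `y_j` with `y_{m+1−j}` using
one uniform key bit makes every bin sum equal to `2y + (m−1)d`, forces
`E[Y | τ] = E[Y]` for every transmitted symbol, and achieves perfect distortion security. -/
theorem stmt16 (m : ℕ) (hm : 0 < m) (y d : ℝ) :
    let yv : Fin m → ℝ := fun j => y + j * d
    let p : Fin m × Bool → ℝ := fun _ => 1 / (2 * m)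
    let Y : Fin m × Bool → ℝ := fun ω => yv ω.1
    let τ : Fin m × Bool → Fin m := fun ω => if ω.2 then ω.1 else Fin.rev ω.1
    (∀ j : Fin m, yv j + yv (Fin.rev j) = 2 * y + ((m : ℝ) - 1) * d) ∧
    (∀ t : Fin m, pcond p Y τ t = pexp p Y) ∧
    pmmse p Y τ = pvar p Y := by
  intro yv p Y τ
  have hm0 : (0:ℝ) < m := by exact_mod_cast hm
  have hrevR : ∀ j : Fin m, ((Fin.rev j : Fin m) : ℝ) = (m:ℝ) - 1 - (j:ℝ) := by
    intro j
    have hj : (j:ℕ) + 1 ≤ m := j.isLt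
    have h1 : ((Fin.rev j : Fin m) : ℕ) = m - ((j:ℕ)+1) := Fin.val_rev j
    rw [h1, Nat.cast_sub hj]; push_cast; ring
  have hpair : ∀ j : Fin m, yv j + yv (Fin.rev j) = 2*y + ((m:ℝ)-1)*d := by
    intro j; simp only [yv, hrevR]; ring
  set μ : ℝ := y + ((m:ℝ) - 1) * d / 2 with hμdef
  have hsum : ∑ j : Fin m, (j:ℝ) = (m:ℝ)*((m:ℝ)-1)/2 := by
    rw [Fin.sum_univ_eq_sum_range (fun i => (i:ℝ)) m]
    have h1 := Finset.sum_range_id_mul_two m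
    have h2 := congrArg (fun n : ℕ => (n:ℝ)) h1
    push_cast [Nat.cast_sub hm] at h2
    linarith
  have hmean : pexp p Y = μ := by
    rw [pexp, Fintype.sum_prod_type]
    have : ∀ j : Fin m, (∑ b : Bool, p (j, b) * Y (j, b)) = (1/(m:ℝ)) * (y + (j:ℝ)*d) := by
      intro j
      simp only [Fintype.sum_bool, p, Y, yv]
      field_simp
      ring
    rw [Finset.sum_congr rfl (fun j _ => this j), ← Finset.mul_sum]
    have h1 : ∑ j : Fin m, (y + (j:ℝ)*d) = (m:ℝ)*y + (m:ℝ)*((m:ℝ)-1)/2 * d := by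
      rw [Finset.sum_add_distrib, Finset.sum_const, Finset.card_univ, Fintype.card_fin,
        ← Finset.sum_mul, hsum]
      ring
    rw [h1, hμdef]
    field_simp
  refine ⟨hpair, ?_, ?_⟩
  · -- conditional expectation
    intro t
    have hne : ((t, true) : Fin m × Bool) ≠ (Fin.rev t, false) := by simp
    have hfilter : Finset.univ.filter (fun ω => τ ω = t)
        = {((t, true) : Fin m × Bool), (Fin.rev t, false)} := by
      ext ⟨j, b⟩
      cases b <;> simp [τ, Fin.rev_eq_iff]
    have h2 : yv t + yv (Fin.rev t) = 2 * μ := by rw [hpair t, hμdef]; ring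
    rw [pcond, hfilter, Finset.sum_pair hne, Finset.sum_pair hne, hmean]
    simp only [p, Y]
    rw [div_eq_iff (by positivity : (1/(2*(m:ℝ)) + 1/(2*(m:ℝ))) ≠ 0)]
    simp only [yv] at h2 ⊢
    linear_combination (1/(2*(m:ℝ))) * h2
  · -- MMSE
    set c : ℝ := 1 / (2*(m:ℝ)) with hc
    have hc0 : 0 ≤ c := by positivity
    set e : Equiv.Perm (Fin m) := Fin.rev_involutive.toPerm _ with he
    have hee : ∀ j : Fin m, e j = Fin.rev j := fun _ => rfl
    have hvar : pvar p Y = ∑ j : Fin m,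
        (c * (yv j - μ)^2 + c * (yv (Fin.rev j) - μ)^2) := by
      have hre : ∑ j : Fin m, c * (yv j - μ)^2 = ∑ j : Fin m, c * (yv (Fin.rev j) - μ)^2 := by
        have := Equiv.sum_comp e (fun j => c * (yv j - μ)^2)
        simpa [hee] using this.symm
      calc pvar p Y = ∑ j : Fin m, (c * (yv j - μ)^2 + c * (yv j - μ)^2) := by
            rw [pvar, hmean, pexp, Fintype.sum_prod_type]
            refine Finset.sum_congr rfl fun j _ => ?_
            simp only [Fintype.sum_bool, p, Y]
            rw [hc]
        _ = (∑ j : Fin m, c * (yv j - μ)^2) + ∑ j : Fin m, c * (yv j - μ)^2 :=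
            Finset.sum_add_distrib
        _ = (∑ j : Fin m, c * (yv j - μ)^2) + ∑ j : Fin m, c * (yv (Fin.rev j) - μ)^2 := by
            rw [← hre]
        _ = _ := Finset.sum_add_distrib.symm
    have hlow : ∀ h : Fin m → ℝ,
        pvar p Y ≤ pexp p (fun ω => (Y ω - h (τ ω)) ^ 2) := by
      intro h
      have hE : pexp p (fun ω => (Y ω - h (τ ω)) ^ 2)
          = ∑ j : Fin m, (c * (yv j - h j)^2 + c * (yv (Fin.rev j) - h j)^2) := by
        have hre : ∑ j : Fin m, c * (yv j - h (Fin.rev j))^2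
            = ∑ j : Fin m, c * (yv (Fin.rev j) - h j)^2 := by
          have := Equiv.sum_comp e (fun j => c * (yv (Fin.rev j) - h j)^2)
          simpa [hee, Fin.rev_rev] using this
        rw [pexp, Fintype.sum_prod_type]
        calc ∑ j : Fin m, ∑ b : Bool, p (j,b) * (Y (j,b) - h (τ (j,b)))^2
            = ∑ j : Fin m, (c * (yv j - h j)^2 + c * (yv j - h (Fin.rev j))^2) := by
              refine Finset.sum_congr rfl fun j _ => ?_
              simp only [Fintype.sum_bool, p, Y, τ, if_true, if_false, Bool.false_eq_true,
                ite_true, ite_false]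
              rw [hc]
          _ = (∑ j : Fin m, c * (yv j - h j)^2) + ∑ j : Fin m, c * (yv j - h (Fin.rev j))^2 :=
              Finset.sum_add_distrib
          _ = (∑ j : Fin m, c * (yv j - h j)^2) + ∑ j : Fin m, c * (yv (Fin.rev j) - h j)^2 := by
              rw [hre]
          _ = _ := Finset.sum_add_distrib.symm
      rw [hE, hvar]
      refine Finset.sum_le_sum fun j _ => ?_
      have hμ2 : yv j + yv (Fin.rev j) = 2 * μ := by rw [hpair j, hμdef]; ring
      have key : c * (yv j - h j)^2 + c * (yv (Fin.rev j) - h j)^2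
          - (c * (yv j - μ)^2 + c * (yv (Fin.rev j) - μ)^2) = 2 * c * (h j - μ)^2 := by
        linear_combination 2 * c * (μ - h j) * hμ2
      nlinarith [mul_nonneg hc0 (sq_nonneg (h j - μ))]
    have hmem : pvar p Y ∈ {e : ℝ | ∃ h : Fin m → ℝ,
        e = pexp p (fun ω => (Y ω - h (τ ω)) ^ 2)} := by
      exact ⟨fun _ => pexp p Y, rfl⟩
    rw [pmmse]
    apply le_antisymm
    · exact csInf_le ⟨pvar p Y, by rintro x ⟨h, rfl⟩; exact hlow h⟩ hmem
    · exact le_csInf ⟨_, hmem⟩ (by rintro x ⟨h, rfl⟩; exact hlow h)
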